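/- Let $\{Q_j\}_{j\in\Gamma}$ be a pairwise disjoint family of dyadic cubes in $\mathbb{R}^n$ and suppose $\mu < |E\cap Q_j^+|/|Q_j| \le 2\mu$ for all $j\in\Gamma$, where $E$ is a measurable set and $\mu>0$. Define $i_m$ as the set of $j\in\Gamma$ such that exactly $m$ indices $s\in\Gamma$ satisfy $Q_j^+\subsetneq Q_s^+$, and $F_m=\bigcup_{j\in i_m}(E\cap Q_j^+)$. Then for every $m_0$ and every $j_0\in i_{m_0}$, one has $|F_{m_0+2^{n+2}}\cap Q_{j_0}^+| < |E\cap Q_{j_0}^+|/2$, and consequently $|Q_{j_0}^+ \setminus F_{m_0+2^{n+2}}| > (\mu/2)|Q_{j_0}|$. -/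

import Mathlib

open MeasureTheory Set ENNReal

noncomputable section

/-- The half-open cube `∏ᵢ [aᵢ, aᵢ + h)` in `ℝⁿ`. -/
def cube {n : ℕ} (a : Fin n → ℝ) (h : ℝ) : Set (Fin n → ℝ) :=
  Set.univ.pi fun i => Set.Ico (a i) (a i + h)

/-- The forward adjacent cube `Q⁺ = ∏ᵢ [aᵢ + h, aᵢ + 2h)`. -/
def cubePlus {n : ℕ} (a : Fin n → ℝ) (h : ℝ) : Set (Fin n → ℝ) :=
  Set.univ.pi fun i => Set.Ico (a i + h) (a i + 2 * h)

/-- The dyadic cube with corner `m * 2^k` and side `2^k`. -/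
def dyCube {n : ℕ} (k : ℤ) (m : Fin n → ℤ) : Set (Fin n → ℝ) :=
  cube (fun i => (m i : ℝ) * 2 ^ k) (2 ^ k)

/-- The forward adjacent cube of a dyadic cube. -/
def dyCubePlus {n : ℕ} (k : ℤ) (m : Fin n → ℤ) : Set (Fin n → ℝ) :=
  cubePlus (fun i => (m i : ℝ) * 2 ^ k) (2 ^ k)

/-- The dyadic one-sided maximal function of the characteristic function of `E`:
`M^{+,d}(χ_E)(x) = sup { |E ∩ Q⁺| / |Q| : Q dyadic cube containing x }`. -/
def Mplusd {n : ℕ} (E : Set (Fin n → ℝ)) (x : Fin n → ℝ) : ℝ≥0∞ :=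
  ⨆ (k : ℤ) (m : Fin n → ℤ) (_ : x ∈ dyCube k m),
    volume (E ∩ dyCubePlus k m) / volume (dyCube k m)

lemma two_zpow_pos (k : ℤ) : (0:ℝ) < 2 ^ k := zpow_pos (by norm_num) k

def dyI (k : ℤ) (m : ℤ) : Set ℝ := Set.Ico ((m:ℝ) * 2 ^ k) ((m + 1 : ℝ) * 2 ^ k)

lemma dyCube_eq_pi {n : ℕ} (k : ℤ) (m : Fin n → ℤ) :
    dyCube k m = Set.univ.pi fun i => dyI k (m i) := by
  unfold dyCube cube dyI
  exact congrArg Set.univ.pi (funext fun i => by congr 1; ring)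

lemma dyCubePlus_eq {n : ℕ} (k : ℤ) (m : Fin n → ℤ) :
    dyCubePlus k m = dyCube k (fun i => m i + 1) := by
  rw [dyCube_eq_pi]
  unfold dyCubePlus cubePlus dyI
  exact congrArg Set.univ.pi (funext fun i => by congr 1 <;> push_cast <;> ring)

lemma dyCube_nonempty {n : ℕ} (k : ℤ) (m : Fin n → ℤ) : (dyCube k m).Nonempty := by
  refine ⟨fun i => (m i : ℝ) * 2 ^ k, ?_⟩
  rw [dyCube_eq_pi]
  intro i _
  refine ⟨le_refl _, ?_⟩
  show (m i : ℝ) * 2 ^ k < ((m i : ℝ) + 1) * 2 ^ k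
  nlinarith [two_zpow_pos k]

/-- dyadic interval dichotomy -/
lemma dyI_subset_or_disjoint {k k' : ℤ} (m m' : ℤ) (hk : k ≤ k') :
    dyI k m ⊆ dyI k' m' ∨ Disjoint (dyI k m) (dyI k' m') := by
  set d : ℕ := (k' - k).toNat with hd
  have hdd : k' = k + d := by simp only [hd]; omega
  have h2 : (2:ℝ) ^ k' = 2 ^ k * 2 ^ d := by
    rw [hdd, zpow_add₀ (two_ne_zero) k, zpow_natCast]
  have hp := two_zpow_pos k
  by_cases hc : m' * 2 ^ d ≤ m ∧ m + 1 ≤ (m' + 1) * 2 ^ d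
  · left
    obtain ⟨h1, h3⟩ := hc
    have h1' : (m':ℝ) * 2 ^ d ≤ m := by exact_mod_cast h1
    have h3' : (m:ℝ) + 1 ≤ (m' + 1) * 2 ^ d := by exact_mod_cast h3
    intro x hx
    obtain ⟨hx1, hx2⟩ := hx
    constructor
    · rw [h2]; nlinarith
    · rw [h2]; nlinarith
  · right
    unfold dyI
    rw [Set.Ico_disjoint_Ico]
    rcases not_and_or.1 hc with h1 | h3
    · push_neg at h1
      have h1' : (m:ℝ) + 1 ≤ m' * 2 ^ d := by exact_mod_cast h1
      refine le_trans (min_le_left _ _) (le_trans ?_ (le_max_right _ _))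
      rw [h2]; nlinarith
    · push_neg at h3
      refine le_trans (min_le_right _ _) (le_trans ?_ (le_max_left _ _))
      rw [h2]
      have h5 : (1:ℝ) ≤ (2:ℝ) ^ d := one_le_pow₀ (by norm_num)
      have h4 : ((m':ℝ) + 1) * 2 ^ d ≤ m := by
        exact_mod_cast (by omega : (m' + 1) * 2 ^ d ≤ m)
      nlinarith

lemma mem_dyCube {n : ℕ} {k : ℤ} {m : Fin n → ℤ} {x : Fin n → ℝ} :
    x ∈ dyCube k m ↔ ∀ i, x i ∈ dyI k (m i) := by
  rw [dyCube_eq_pi]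
  simp [Set.mem_pi]

lemma dyI_nonempty (k m : ℤ) : ((m:ℝ) * 2 ^ k) ∈ dyI k m := by
  refine ⟨le_refl _, ?_⟩
  nlinarith [two_zpow_pos k]

lemma dyCube_subset_iff {n : ℕ} {k k' : ℤ} {m m' : Fin n → ℤ} :
    dyCube k m ⊆ dyCube k' m' ↔ ∀ i, dyI k (m i) ⊆ dyI k' (m' i) := by
  constructor
  · intro hsub i t ht
    set y : Fin n → ℝ := Function.update (fun j => (m j : ℝ) * 2 ^ k) i t with hy
    have hymem : y ∈ dyCube k m := by
      rw [mem_dyCube]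
      intro j
      rcases eq_or_ne j i with rfl | hji
      · simpa [hy] using ht
      · simpa [hy, Function.update_of_ne hji] using dyI_nonempty k (m j)
    have := mem_dyCube.1 (hsub hymem) i
    simpa [hy] using this
  · intro h
    rw [dyCube_eq_pi, dyCube_eq_pi]
    exact Set.pi_mono fun i _ => h i

lemma dyI_subset_le {k k' m m' : ℤ} (h : dyI k m ⊆ dyI k' m') : k ≤ k' := by
  have h1 : (m:ℝ) * 2 ^ k < (m + 1 : ℝ) * 2 ^ k := by nlinarith [two_zpow_pos k]
  rw [dyI, dyI, Set.Ico_subset_Ico_iff h1] at h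
  have : (2:ℝ) ^ k ≤ 2 ^ k' := by nlinarith [h.1, h.2]
  exact (zpow_le_zpow_iff_right₀ (by norm_num : (1:ℝ) < 2)).1 this

lemma dyI_subset_same {k m m' : ℤ} (h : dyI k m ⊆ dyI k m') : m = m' := by
  have h1 : (m:ℝ) * 2 ^ k < (m + 1 : ℝ) * 2 ^ k := by nlinarith [two_zpow_pos k]
  rw [dyI, dyI, Set.Ico_subset_Ico_iff h1] at h
  have hp := two_zpow_pos k
  have : (m':ℝ) = m := by nlinarith [h.1, h.2]
  exact_mod_cast this.symm

lemma dyCube_subset_or_subset {n : ℕ} {k k' : ℤ} {m m' : Fin n → ℤ}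
    (hne : (dyCube k m ∩ dyCube k' m').Nonempty) :
    dyCube k m ⊆ dyCube k' m' ∨ dyCube k' m' ⊆ dyCube k m := by
  obtain ⟨x, hx1, hx2⟩ := hne
  rw [mem_dyCube] at hx1 hx2
  rcases le_total k k' with hk | hk
  · left
    rw [dyCube_subset_iff]
    intro i
    rcases dyI_subset_or_disjoint (m i) (m' i) hk with h | h
    · exact h
    · exact absurd (Set.not_disjoint_iff.2 ⟨x i, hx1 i, hx2 i⟩) (by exact fun hn => hn h)
  · right
    rw [dyCube_subset_iff]
    intro i
    rcases dyI_subset_or_disjoint (m' i) (m i) hk with h | h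
    · exact h
    · exact absurd (Set.not_disjoint_iff.2 ⟨x i, hx2 i, hx1 i⟩) (by exact fun hn => hn h)

lemma dyCube_subset_le {n : ℕ} (hn : 0 < n) {k k' : ℤ} {m m' : Fin n → ℤ}
    (h : dyCube k m ⊆ dyCube k' m') : k ≤ k' :=
  dyI_subset_le (dyCube_subset_iff.1 h ⟨0, hn⟩)

lemma dyCube_inj {n : ℕ} (hn : 0 < n) {k k' : ℤ} {m m' : Fin n → ℤ}
    (h : dyCube k m = dyCube k' m') : k = k' ∧ m = m' := by
  have h1 := dyCube_subset_iff.1 h.le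
  have h2 := dyCube_subset_iff.1 h.ge
  have hk : k = k' :=
    le_antisymm (dyI_subset_le (h1 ⟨0, hn⟩)) (dyI_subset_le (h2 ⟨0, hn⟩))
  subst hk
  exact ⟨rfl, funext fun i => dyI_subset_same (h1 i)⟩

lemma dyCube_ssubset_lt {n : ℕ} (hn : 0 < n) {k k' : ℤ} {m m' : Fin n → ℤ}
    (h : dyCube k m ⊂ dyCube k' m') : k < k' := by
  rcases lt_or_eq_of_le (dyCube_subset_le hn h.subset) with hlt | rfl
  · exact hlt
  · exfalso
    have : m = m' := funext fun i => dyI_subset_same (dyCube_subset_iff.1 h.subset i)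
    rw [this] at h
    exact h.ne rfl

lemma volume_dyCube {n : ℕ} (k : ℤ) (m : Fin n → ℤ) :
    volume (dyCube k m) = (ENNReal.ofReal (2 ^ k)) ^ n := by
  rw [dyCube_eq_pi]
  rw [volume_pi_pi]
  have : ∀ i : Fin n, volume (dyI k (m i)) = ENNReal.ofReal (2 ^ k) := by
    intro i
    rw [dyI, Real.volume_Ico]
    congr 1
    ring
  simp [this]

lemma volume_dyCube_pos {n : ℕ} (k : ℤ) (m : Fin n → ℤ) : 0 < volume (dyCube k m) := by
  rw [volume_dyCube]
  positivity

lemma volume_dyCube_lt_top {n : ℕ} (k : ℤ) (m : Fin n → ℤ) : volume (dyCube k m) < ⊤ := by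
  rw [volume_dyCube]
  exact ENNReal.pow_lt_top ENNReal.ofReal_lt_top

lemma measurable_dyCube {n : ℕ} (k : ℤ) (m : Fin n → ℤ) : MeasurableSet (dyCube k m) := by
  rw [dyCube_eq_pi]
  exact MeasurableSet.univ_pi fun i => measurableSet_Ico

section Comb

variable {n : ℕ} {ι : Type*} (k : ι → ℤ) (a : ι → Fin n → ℤ)

/-- plus-cubes as dyadic cubes -/
lemma P_eq (j : ι) : dyCubePlus (k j) (a j) = dyCube (k j) (fun i => a j i + 1) :=
  dyCubePlus_eq _ _

lemma P_nonempty (j : ι) : (dyCubePlus (k j) (a j)).Nonempty := by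
  rw [P_eq]; exact dyCube_nonempty _ _

lemma P_inj (hn : 0 < n)
    (hdisj : Pairwise fun i j => Disjoint (dyCube (k i) (a i)) (dyCube (k j) (a j)))
    {s t : ι} (h : dyCubePlus (k s) (a s) = dyCubePlus (k t) (a t)) : s = t := by
  by_contra hst
  rw [P_eq, P_eq] at h
  obtain ⟨hk, hm⟩ := dyCube_inj hn h
  have ham : a s = a t := by
    funext i
    have := congrFun hm i
    omega
  have hQ : dyCube (k s) (a s) = dyCube (k t) (a t) := by rw [hk, ham]
  obtain ⟨x, hx⟩ := dyCube_nonempty (k s) (a s)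
  exact Set.disjoint_left.1 (hdisj hst) hx (hQ ▸ hx)

lemma P_comparable {s t : ι}
    (hne : (dyCubePlus (k s) (a s) ∩ dyCubePlus (k t) (a t)).Nonempty) :
    dyCubePlus (k s) (a s) ⊆ dyCubePlus (k t) (a t) ∨
      dyCubePlus (k t) (a t) ⊆ dyCubePlus (k s) (a s) := by
  rw [P_eq, P_eq] at hne ⊢
  exact dyCube_subset_or_subset hne

/-- main combinatorial lemma: existence of an intermediate cube at any prescribed level -/
lemma exists_mid (hn : 0 < n)
    (hdisj : Pairwise fun i j => Disjoint (dyCube (k i) (a i)) (dyCube (k j) (a j)))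
    {M m₀ r : ℕ} {j j₀ : ι}
    (hA : {s : ι | dyCubePlus (k j) (a j) ⊂ dyCubePlus (k s) (a s)}.Finite)
    (hAcard : {s : ι | dyCubePlus (k j) (a j) ⊂ dyCubePlus (k s) (a s)}.ncard = M)
    (hj₀cnt : {s : ι | dyCubePlus (k j₀) (a j₀) ⊂ dyCubePlus (k s) (a s)}.ncard = m₀)
    (hjj₀ : dyCubePlus (k j) (a j) ⊂ dyCubePlus (k j₀) (a j₀))
    (hr : m₀ < r) (hrM : r < M) :
    ∃ s, ({t : ι | dyCubePlus (k s) (a s) ⊂ dyCubePlus (k t) (a t)}.Finite ∧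
        {t : ι | dyCubePlus (k s) (a s) ⊂ dyCubePlus (k t) (a t)}.ncard = r) ∧
      dyCubePlus (k j) (a j) ⊂ dyCubePlus (k s) (a s) ∧
      dyCubePlus (k s) (a s) ⊂ dyCubePlus (k j₀) (a j₀) := by
  set P : ι → Set (Fin n → ℝ) := fun s => dyCubePlus (k s) (a s) with hP
  set A : Set ι := {s : ι | P j ⊂ P s} with hAdef
  set c : ι → ℕ := fun s => {t : ι | P s ⊂ P t}.ncard with hc
  -- the cubes indexed by A form a chain
  have hchain : ∀ s ∈ A, ∀ t ∈ A, s ≠ t → P s ⊂ P t ∨ P t ⊂ P s := by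
    intro s hs t ht hst
    obtain ⟨x, hx⟩ := P_nonempty k a j
    have hxs : x ∈ P s := (Set.mem_setOf.1 hs).subset hx
    have hxt : x ∈ P t := (Set.mem_setOf.1 ht).subset hx
    rcases P_comparable k a ⟨x, hxs, hxt⟩ with h | h
    · left
      exact h.ssubset_of_ne (fun he => hst (P_inj k a hn hdisj he))
    · right
      exact h.ssubset_of_ne (fun he => hst (P_inj k a hn hdisj he.symm))
  have hsubA : ∀ s ∈ A, {t : ι | P s ⊂ P t} ⊆ A := by
    intro s hs t ht
    exact Set.mem_setOf.2 (ssubset_trans (Set.mem_setOf.1 hs) (Set.mem_setOf.1 ht))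
  have hclt : ∀ s ∈ A, ∀ t, P s ⊂ P t → c t < c s := by
    intro s hs t hst
    refine Set.ncard_lt_ncard ?_ (hA.subset (hsubA s hs))
    constructor
    · exact fun u hu => Set.mem_setOf.2 (ssubset_trans hst (Set.mem_setOf.1 hu))
    · intro hcon
      exact absurd (Set.mem_setOf.1 (hcon (Set.mem_setOf.2 hst))) (ssubset_irrefl _)
  have hcInj : Set.InjOn c A := by
    intro s hs t ht hst
    by_contra hne
    rcases hchain s hs t ht hne with h | h
    · have h1 := hclt s hs t h
      have h2 := hsubA s hs
      omega
    · have h1 := hclt t ht s h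
      omega
  have hcbound : ∀ s ∈ A, c s < M := by
    intro s hs
    rw [← hAcard]
    refine Set.ncard_lt_ncard ?_ hA
    constructor
    · exact hsubA s hs
    · intro hcon
      exact absurd (Set.mem_setOf.1 (hcon hs)) (ssubset_irrefl _)
  -- c : A → range M is injective between sets of size M, hence surjective
  have hAf : (hA.toFinset).card = M := by
    rw [← Set.ncard_eq_toFinset_card _ hA]
    exact hAcard
  have himg : (hA.toFinset.image c).card = M := by
    rw [Finset.card_image_of_injOn (by simpa using hcInj), hAf]
  have hsubrange : hA.toFinset.image c ⊆ Finset.range M := by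
    intro x hx
    obtain ⟨s, hs, rfl⟩ := Finset.mem_image.1 hx
    exact Finset.mem_range.2 (hcbound s (hA.mem_toFinset.1 hs))
  have heq : hA.toFinset.image c = Finset.range M :=
    Finset.eq_of_subset_of_card_le hsubrange (by rw [himg, Finset.card_range])
  have hrmem : r ∈ hA.toFinset.image c := by rw [heq]; exact Finset.mem_range.2 hrM
  obtain ⟨s, hsA, hcs⟩ := Finset.mem_image.1 hrmem
  have hsA' : s ∈ A := hA.mem_toFinset.1 hsA
  have hj₀A : j₀ ∈ A := hjj₀
  refine ⟨s, ⟨hA.subset (hsubA s hsA'), hcs⟩, hsA', ?_⟩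
  have hsne : s ≠ j₀ := by
    intro h
    rw [h] at hcs
    exact absurd (hcs.symm.trans hj₀cnt) (by omega)
  rcases hchain s hsA' j₀ hj₀A hsne with h | h
  · exact h
  · exfalso
    have := hclt j₀ hj₀A s h
    rw [hcs] at this
    have : r < m₀ := by rw [← hj₀cnt]; exact this
    omega

end Comb

/-- enlarged cube around `Q⁺` -/
def Rset {n : ℕ} (K : ℤ) (A : Fin n → ℤ) : Set (Fin n → ℝ) :=
  Set.univ.pi fun i => Set.Ico (((A i : ℝ) + 1) * 2 ^ K - 2 ^ K / 2)
    (((A i : ℝ) + 1) * 2 ^ K + 2 ^ K)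

lemma volume_Rset {n : ℕ} (K : ℤ) (A : Fin n → ℤ) :
    volume (Rset K A) = (ENNReal.ofReal (3 / 2 * 2 ^ K)) ^ n := by
  rw [Rset, volume_pi_pi]
  have : ∀ i : Fin n,
      volume (Set.Ico (((A i : ℝ) + 1) * 2 ^ K - 2 ^ K / 2) (((A i : ℝ) + 1) * 2 ^ K + 2 ^ K))
        = ENNReal.ofReal (3 / 2 * 2 ^ K) := by
    intro i
    rw [Real.volume_Ico]
    congr 1
    ring
  simp [this]

lemma measurableSet_Rset {n : ℕ} (K : ℤ) (A : Fin n → ℤ) : MeasurableSet (Rset K A) :=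
  MeasurableSet.univ_pi fun i => measurableSet_Ico

lemma Q_subset_Rset {n : ℕ} (hn : 0 < n) {ks K : ℤ} {as A : Fin n → ℤ}
    (h : dyCubePlus ks as ⊂ dyCubePlus K A) : dyCube ks as ⊆ Rset K A := by
  rw [dyCubePlus_eq, dyCubePlus_eq] at h
  have hkK : ks < K := dyCube_ssubset_lt hn h
  have hH : (2:ℝ) ^ ks ≤ 2 ^ K / 2 := by
    have h1 : (2:ℝ) ^ ks ≤ 2 ^ (K - 1) :=
      (zpow_le_zpow_iff_right₀ (by norm_num : (1:ℝ) < 2)).2 (by omega)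
    have h2 : (2:ℝ) ^ (K - 1) = 2 ^ K / 2 := by
      rw [zpow_sub₀ (two_ne_zero)]
      norm_num
    linarith
  have hints := dyCube_subset_iff.1 h.subset
  intro x hx i _
  obtain ⟨hx1, hx2⟩ := mem_dyCube.1 hx i
  have hint := hints i
  rw [dyI, dyI, Set.Ico_subset_Ico_iff
    (by nlinarith [two_zpow_pos ks] :
      ((as i + 1 : ℤ) : ℝ) * 2 ^ ks < (((as i + 1 : ℤ) : ℝ) + 1) * 2 ^ ks)] at hint
  obtain ⟨hlow, hup⟩ := hint
  push_cast at hlow hup hx1 hx2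
  constructor
  · show ((A i : ℝ) + 1) * 2 ^ K - 2 ^ K / 2 ≤ x i
    nlinarith [two_zpow_pos ks]
  · show x i < ((A i : ℝ) + 1) * 2 ^ K + 2 ^ K
    nlinarith [two_zpow_pos ks, two_zpow_pos K]


lemma aux_num (n : ℕ) (hn : 1 ≤ n) : 4 * (3/2:ℝ) ^ n ≤ 2 ^ (n + 2) - 1 := by
  induction n with
  | zero => omega
  | succ m ih =>
    rcases Nat.eq_zero_or_pos m with rfl | hm
    · norm_num
    · have h1 := ih hm
      have h3 : (1:ℝ) ≤ 2 ^ (m + 2) := one_le_pow₀ (by norm_num)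
      have e1 : (3/2:ℝ) ^ (m + 1) = (3/2) ^ m * (3/2) := pow_succ _ _
      have e2 : (2:ℝ) ^ (m + 1 + 2) = 2 ^ (m + 2) * 2 := pow_succ _ _
      nlinarith

/-- With `i_m` as before and `F_m = ⋃_{j ∈ i_m} (E ∩ Q_j⁺)`, if
`μ < |E ∩ Q_j⁺|/|Q_j| ≤ 2μ` for all `j`, then for every `m₀` and `j₀ ∈ i_{m₀}`,
`|F_{m₀+2^{n+2}} ∩ Q_{j₀}⁺| < |E ∩ Q_{j₀}⁺|/2`, and consequently
`|Q_{j₀}⁺ \ F_{m₀+2^{n+2}}| > (μ/2)|Q_{j₀}|`. -/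
theorem Fm_small_on_Qj0plus {n : ℕ} (μ : ℝ) (hμ : 0 < μ)
    (E : Set (Fin n → ℝ)) (hE : MeasurableSet E)
    {ι : Type*} [Countable ι] (k : ι → ℤ) (a : ι → Fin n → ℤ)
    (hdisj : Pairwise fun i j => Disjoint (dyCube (k i) (a i)) (dyCube (k j) (a j)))
    (hlow : ∀ j, ENNReal.ofReal μ
      < volume (E ∩ dyCubePlus (k j) (a j)) / volume (dyCube (k j) (a j)))
    (hhigh : ∀ j, volume (E ∩ dyCubePlus (k j) (a j)) / volume (dyCube (k j) (a j))
      ≤ 2 * ENNReal.ofReal μ)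
    (im : ℕ → Set ι)
    (him : ∀ M j, j ∈ im M ↔
      ({s : ι | dyCubePlus (k j) (a j) ⊂ dyCubePlus (k s) (a s)}.Finite ∧
        {s : ι | dyCubePlus (k j) (a j) ⊂ dyCubePlus (k s) (a s)}.ncard = M))
    (F : ℕ → Set (Fin n → ℝ))
    (hF : ∀ M, F M = ⋃ j ∈ im M, E ∩ dyCubePlus (k j) (a j))
    (m₀ : ℕ) (j₀ : ι) (hj₀ : j₀ ∈ im m₀) :
    volume (F (m₀ + 2 ^ (n + 2)) ∩ dyCubePlus (k j₀) (a j₀))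
        < volume (E ∩ dyCubePlus (k j₀) (a j₀)) / 2 ∧
      ENNReal.ofReal μ / 2 * volume (dyCube (k j₀) (a j₀))
        < volume (dyCubePlus (k j₀) (a j₀) \ F (m₀ + 2 ^ (n + 2))) := by
  set M : ℕ := m₀ + 2 ^ (n + 2) with hM
  have hQ0pos : volume (dyCube (k j₀) (a j₀)) ≠ 0 := (volume_dyCube_pos _ _).ne'
  have hQ0top : volume (dyCube (k j₀) (a j₀)) ≠ ⊤ := (volume_dyCube_lt_top _ _).ne
  have hEPtop : volume (E ∩ dyCubePlus (k j₀) (a j₀)) ≠ ⊤ := by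
    refine ne_top_of_le_ne_top ?_ (measure_mono Set.inter_subset_right)
    rw [P_eq k a j₀]
    exact (volume_dyCube_lt_top _ _).ne
  have hlow' : ENNReal.ofReal μ * volume (dyCube (k j₀) (a j₀))
      < volume (E ∩ dyCubePlus (k j₀) (a j₀)) :=
    (ENNReal.lt_div_iff_mul_lt (Or.inl hQ0pos) (Or.inl hQ0top)).1 (hlow j₀)
  have hj₀c := (him m₀ j₀).1 hj₀
  -- the key estimate
  have key : volume (F M ∩ dyCubePlus (k j₀) (a j₀))
      ≤ ENNReal.ofReal μ / 2 * volume (dyCube (k j₀) (a j₀)) := by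
    rcases Nat.eq_zero_or_pos n with rfl | hn
    · -- n = 0 : the relevant index set is empty
      have hPuniv : ∀ s : ι, dyCubePlus (k s) (a s) = (Set.univ : Set (Fin 0 → ℝ)) := by
        intro s
        ext x
        simp [dyCubePlus, cubePlus]
      have himM : im M = ∅ := by
        ext j
        simp only [Set.mem_empty_iff_false, iff_false]
        intro hj
        obtain ⟨hfin, hcard⟩ := (him M j).1 hj
        have : {s : ι | dyCubePlus (k j) (a j) ⊂ dyCubePlus (k s) (a s)} = ∅ := by
          ext s
          simp only [Set.mem_setOf_eq, Set.mem_empty_iff_false, iff_false]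
          rw [hPuniv j, hPuniv s]
          exact ssubset_irrefl _
        rw [this] at hcard
        simp at hcard
      rw [hF M, himM]
      simp
    · -- main case n ≥ 1
      set K : ℕ := 2 ^ (n + 2) with hK
      have hK4 : 4 ≤ K := by
        rw [hK]
        calc 4 = 2 ^ 2 := by norm_num
        _ ≤ 2 ^ (n + 2) := Nat.pow_le_pow_right (by norm_num) (by omega)
      set T : ℕ → Set ι := fun r =>
        {s | s ∈ im (m₀ + r) ∧ dyCubePlus (k s) (a s) ⊂ dyCubePlus (k j₀) (a j₀)} with hT
      set B : ℕ → Set (Fin n → ℝ) := fun r => ⋃ s ∈ T r, dyCube (k s) (a s) with hB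
      set G : ℕ → Set (Fin n → ℝ) := fun r => ⋃ s ∈ T r, E ∩ dyCubePlus (k s) (a s) with hG
      -- any cube at level M meeting P j₀ is strictly inside it
      have hPsub : ∀ j, j ∈ im M →
          (dyCubePlus (k j) (a j) ∩ dyCubePlus (k j₀) (a j₀)).Nonempty →
          dyCubePlus (k j) (a j) ⊂ dyCubePlus (k j₀) (a j₀) := by
        intro j hj hne
        obtain ⟨hfin, hcard⟩ := (him M j).1 hj
        have hMne : M ≠ m₀ := by omega
        rcases P_comparable k a hne with h | h
        · refine h.ssubset_of_ne fun he => ?_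
          have : j = j₀ := P_inj k a hn hdisj he
          rw [this] at hcard
          exact hMne (hcard ▸ hj₀c.2 ▸ rfl)
        · exfalso
          have hne' : dyCubePlus (k j₀) (a j₀) ≠ dyCubePlus (k j) (a j) := by
            intro he
            have : j₀ = j := P_inj k a hn hdisj he
            rw [← this] at hcard
            exact hMne (hcard ▸ hj₀c.2 ▸ rfl)
          have hss : dyCubePlus (k j₀) (a j₀) ⊂ dyCubePlus (k j) (a j) :=
            h.ssubset_of_ne hne'
          have hsub2 : insert j {t : ι | dyCubePlus (k j) (a j) ⊂ dyCubePlus (k t) (a t)}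
              ⊆ {t : ι | dyCubePlus (k j₀) (a j₀) ⊂ dyCubePlus (k t) (a t)} := by
            intro t ht
            rcases Set.mem_insert_iff.1 ht with rfl | ht'
            · exact Set.mem_setOf.2 hss
            · exact Set.mem_setOf.2 (ssubset_trans hss (Set.mem_setOf.1 ht'))
          have hjnot : j ∉ {t : ι | dyCubePlus (k j) (a j) ⊂ dyCubePlus (k t) (a t)} :=
            fun hc => ssubset_irrefl _ (Set.mem_setOf.1 hc)
          have hcardins := Set.ncard_insert_of_notMem hjnot hfin
          have hle := Set.ncard_le_ncard hsub2 hj₀c.1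
          rw [hcardins, hcard, hj₀c.2] at hle
          omega
      -- F M ∩ P j₀ is contained in each G r
      have hstep1 : ∀ r ∈ Finset.Ico 1 K,
          F M ∩ dyCubePlus (k j₀) (a j₀) ⊆ G r := by
        intro r hr
        obtain ⟨hr1, hrK⟩ := Finset.mem_Ico.1 hr
        rintro x ⟨hxF, hxP0⟩
        rw [hF M] at hxF
        simp only [Set.mem_iUnion] at hxF
        obtain ⟨j, hjm, hxE, hxPj⟩ := hxF
        have hjsub := hPsub j hjm ⟨x, hxPj, hxP0⟩
        obtain ⟨hfin, hcard⟩ := (him M j).1 hjm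
        obtain ⟨s, ⟨hsfin, hscard⟩, hs1, hs2⟩ :=
          exists_mid k a hn hdisj hfin hcard hj₀c.2 hjsub
            (show m₀ < m₀ + r by omega) (show m₀ + r < M by omega)
        refine Set.mem_biUnion (show s ∈ T r from ⟨(him (m₀ + r) s).2 ⟨hsfin, hscard⟩, hs2⟩) ?_
        exact ⟨hxE, hs1.subset hxPj⟩
      -- volume of G r via the disjoint base cubes
      have hvolE : ∀ s : ι, volume (E ∩ dyCubePlus (k s) (a s))
          ≤ 2 * ENNReal.ofReal μ * volume (dyCube (k s) (a s)) := by
        intro s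
        have := hhigh s
        rwa [ENNReal.div_le_iff (volume_dyCube_pos _ _).ne' (volume_dyCube_lt_top _ _).ne]
          at this
      have hGle : ∀ r : ℕ, volume (G r) ≤ 2 * ENNReal.ofReal μ * volume (B r) := by
        intro r
        have hdisjT : (T r).PairwiseDisjoint fun s => dyCube (k s) (a s) :=
          fun s _ t _ hst => hdisj hst
        calc volume (G r) ≤ ∑' s : T r, volume (E ∩ dyCubePlus (k s) (a s)) :=
              measure_biUnion_le volume (T r).to_countable _
          _ ≤ ∑' s : T r, 2 * ENNReal.ofReal μ * volume (dyCube (k s) (a s)) :=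
              ENNReal.tsum_le_tsum fun s => hvolE s
          _ = 2 * ENNReal.ofReal μ * ∑' s : T r, volume (dyCube (k s) (a s)) :=
              ENNReal.tsum_mul_left
          _ = 2 * ENNReal.ofReal μ * volume (B r) := by
              rw [measure_biUnion (T r).to_countable hdisjT
                (fun s _ => measurable_dyCube _ _)]
      -- the B r are pairwise disjoint and sit in the enlarged cube
      have hdisjB : (↑(Finset.Ico 1 K) : Set ℕ).PairwiseDisjoint B := by
        intro r hr r' hr' hne
        rw [Function.onFun, Set.disjoint_left]
        intro x hx hx'
        simp only [hB, Set.mem_iUnion] at hx hx'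
        obtain ⟨s, hsT, hxs⟩ := hx
        obtain ⟨t, htT, hxt⟩ := hx'
        have hst : s ≠ t := by
          intro he
          rw [he] at hsT
          have h1 := ((him (m₀ + r) t).1 hsT.1).2
          have h2 := ((him (m₀ + r') t).1 htT.1).2
          omega
        exact Set.disjoint_left.1 (hdisj hst) hxs hxt
      have hBmeas : ∀ r : ℕ, MeasurableSet (B r) :=
        fun r => MeasurableSet.biUnion (T r).to_countable fun s _ => measurable_dyCube _ _
      have hBsub : ∀ r : ℕ, B r ⊆ Rset (k j₀) (a j₀) :=
        fun r => Set.iUnion₂_subset fun s hs => Q_subset_Rset hn hs.2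
      -- summing up
      have hcardIco : (Finset.Ico 1 K).card = K - 1 := by rw [Nat.card_Ico]
      have hsum : (↑(K - 1) : ℝ≥0∞) * volume (F M ∩ dyCubePlus (k j₀) (a j₀))
          ≤ 2 * ENNReal.ofReal μ * volume (Rset (k j₀) (a j₀)) := by
        calc (↑(K - 1) : ℝ≥0∞) * volume (F M ∩ dyCubePlus (k j₀) (a j₀))
            = ∑ _r ∈ Finset.Ico 1 K, volume (F M ∩ dyCubePlus (k j₀) (a j₀)) := by
              rw [Finset.sum_const, hcardIco, nsmul_eq_mul]
          _ ≤ ∑ r ∈ Finset.Ico 1 K, volume (G r) :=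
              Finset.sum_le_sum fun r hr => measure_mono (hstep1 r hr)
          _ ≤ ∑ r ∈ Finset.Ico 1 K, 2 * ENNReal.ofReal μ * volume (B r) :=
              Finset.sum_le_sum fun r _ => hGle r
          _ = 2 * ENNReal.ofReal μ * ∑ r ∈ Finset.Ico 1 K, volume (B r) := by
              rw [Finset.mul_sum]
          _ = 2 * ENNReal.ofReal μ * volume (⋃ r ∈ Finset.Ico 1 K, B r) := by
              rw [measure_biUnion_finset hdisjB fun r _ => hBmeas r]
          _ ≤ 2 * ENNReal.ofReal μ * volume (Rset (k j₀) (a j₀)) :=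
              mul_le_mul_right (measure_mono (Set.iUnion₂_subset fun r _ => hBsub r)) _
      -- the numeric inequality
      have hnum : 2 * ENNReal.ofReal μ * volume (Rset (k j₀) (a j₀))
          ≤ (↑(K - 1) : ℝ≥0∞) * (ENNReal.ofReal μ / 2 * volume (dyCube (k j₀) (a j₀))) := by
        rw [volume_Rset, volume_dyCube]
        have hsplit : ENNReal.ofReal (3 / 2 * 2 ^ (k j₀))
            = ENNReal.ofReal (3 / 2) * ENNReal.ofReal (2 ^ (k j₀)) :=
          ENNReal.ofReal_mul (by norm_num)
        rw [hsplit, mul_pow]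
        rw [show (2 : ℝ≥0∞) * ENNReal.ofReal μ * (ENNReal.ofReal (3/2) ^ n
            * ENNReal.ofReal (2 ^ (k j₀)) ^ n)
          = (2 * ENNReal.ofReal μ * ENNReal.ofReal (3/2) ^ n)
            * ENNReal.ofReal (2 ^ (k j₀)) ^ n by ring]
        rw [show (↑(K - 1) : ℝ≥0∞) * (ENNReal.ofReal μ / 2 * ENNReal.ofReal (2 ^ (k j₀)) ^ n)
          = ((↑(K - 1) : ℝ≥0∞) * (ENNReal.ofReal μ / 2)) * ENNReal.ofReal (2 ^ (k j₀)) ^ n by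
            ring]
        refine mul_le_mul_left ?_ _
        have e1 : (2 : ℝ≥0∞) * ENNReal.ofReal μ * ENNReal.ofReal (3/2) ^ n
            = ENNReal.ofReal (2 * μ * (3/2) ^ n) := by
          rw [ENNReal.ofReal_mul (by positivity : (0:ℝ) ≤ 2 * μ),
            ENNReal.ofReal_mul (by norm_num : (0:ℝ) ≤ 2), ENNReal.ofReal_pow (by norm_num)]
          simp [ENNReal.ofReal_ofNat]
        have e2 : (↑(K - 1) : ℝ≥0∞) * (ENNReal.ofReal μ / 2)
            = ENNReal.ofReal ((K - 1 : ℕ) * (μ / 2)) := by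
          rw [ENNReal.ofReal_mul (by positivity : (0:ℝ) ≤ ((K - 1 : ℕ) : ℝ))]
          rw [ENNReal.ofReal_natCast]
          congr 1
          rw [ENNReal.ofReal_div_of_pos (by norm_num : (0:ℝ) < 2)]
          simp [ENNReal.ofReal_ofNat]
        rw [e1, e2]
        apply ENNReal.ofReal_le_ofReal
        have hKr : ((K - 1 : ℕ) : ℝ) = 2 ^ (n + 2) - 1 := by
          rw [Nat.cast_sub (by omega : 1 ≤ K), hK]
          push_cast
          ring
        rw [hKr]
        have := aux_num n hn
        nlinarith [pow_pos (by norm_num : (0:ℝ) < 3/2) n]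
      have hfinal := le_trans hsum hnum
      have hKne : (↑(K - 1) : ℝ≥0∞) ≠ 0 := by
        simp only [ne_eq, Nat.cast_eq_zero]
        omega
      exact (ENNReal.mul_le_mul_iff_right hKne (ENNReal.natCast_ne_top _)).1 hfinal
  -- conclusion 1
  have h2 : ENNReal.ofReal μ / 2 * volume (dyCube (k j₀) (a j₀))
      < volume (E ∩ dyCubePlus (k j₀) (a j₀)) / 2 := by
    rw [ENNReal.lt_div_iff_mul_lt (Or.inl two_ne_zero) (Or.inl ENNReal.ofNat_ne_top)]
    calc ENNReal.ofReal μ / 2 * volume (dyCube (k j₀) (a j₀)) * 2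
        = ENNReal.ofReal μ / 2 * 2 * volume (dyCube (k j₀) (a j₀)) := by ring
      _ = ENNReal.ofReal μ * volume (dyCube (k j₀) (a j₀)) := by
          rw [ENNReal.div_mul_cancel two_ne_zero ENNReal.ofNat_ne_top]
      _ < volume (E ∩ dyCubePlus (k j₀) (a j₀)) := hlow'
  have c1 : volume (F M ∩ dyCubePlus (k j₀) (a j₀))
      < volume (E ∩ dyCubePlus (k j₀) (a j₀)) / 2 := lt_of_le_of_lt key h2
  refine ⟨c1, ?_⟩
  -- conclusion 2
  by_contra hcon
  push_neg at hcon
  have hsplit : volume (E ∩ dyCubePlus (k j₀) (a j₀))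
      ≤ volume (dyCubePlus (k j₀) (a j₀) \ F M)
        + volume (F M ∩ dyCubePlus (k j₀) (a j₀)) := by
    refine le_trans (measure_mono ?_) (measure_union_le _ _)
    intro x ⟨hxE, hxP⟩
    by_cases hxF : x ∈ F M
    · exact Or.inr ⟨hxF, hxP⟩
    · exact Or.inl ⟨hxP, hxF⟩
  have hD : volume (dyCubePlus (k j₀) (a j₀) \ F M)
      < volume (E ∩ dyCubePlus (k j₀) (a j₀)) / 2 := lt_of_le_of_lt hcon h2
  have := lt_of_le_of_lt hsplit (ENNReal.add_lt_add hD c1)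
  rw [ENNReal.add_halves] at this
  exact lt_irrefl _ this

end
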